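/- Let μ ∈ (−1, 1) and κ ∈ ℝ, and define f(x) := (1 + μ cos x)⁻², g(y) := y²(1 − y²), and y(x) := sech(κ + x + μ sin x). Then for all x ∈ ℝ, (y'(x))² = g(y(x))/f(x). -/

import Mathlib

/-- The explicit homoclinic solution of the paper's example: for
`f(x) = (1 + μ cos x)⁻²`, `g(y) = y²(1 − y²)`, the hyperbolic-secant profile
`y(x) = sech(κ + x + μ sin x)` satisfies the orbit equation `y'² = g(y)/f(x)`. -/
theorem stmt10 (μ κ : ℝ) (hμ : μ ∈ Set.Ioo (-1 : ℝ) 1)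
    (f g y : ℝ → ℝ)
    (hf : ∀ x : ℝ, f x = ((1 + μ * Real.cos x) ^ 2)⁻¹)
    (hg : ∀ t : ℝ, g t = t ^ 2 * (1 - t ^ 2))
    (hy : ∀ x : ℝ, y x = (Real.cosh (κ + x + μ * Real.sin x))⁻¹) :
    ∀ x : ℝ, (deriv y x) ^ 2 = g (y x) / f x := by
  intro x
  set u : ℝ := κ + x + μ * Real.sin x with hu
  have hcne : Real.cosh u ≠ 0 := (Real.cosh_pos (x := u)).ne'
  have hinner : HasDerivAt (fun x : ℝ => κ + x + μ * Real.sin x)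
      (1 + μ * Real.cos x) x := by
    have h1 : HasDerivAt (fun x : ℝ => κ + x) 1 x := (hasDerivAt_id x).const_add κ
    have h2 : HasDerivAt (fun x : ℝ => μ * Real.sin x) (μ * Real.cos x) x :=
      (Real.hasDerivAt_sin x).const_mul μ
    exact h1.add h2
  have hcosh : HasDerivAt (fun x : ℝ => Real.cosh (κ + x + μ * Real.sin x))
      (Real.sinh u * (1 + μ * Real.cos x)) x := hinner.cosh
  have hder : HasDerivAt y
      (-(Real.sinh u * (1 + μ * Real.cos x)) / (Real.cosh u) ^ 2) x := by
    have := hcosh.inv hcne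
    have hyeq : y = fun x : ℝ => (Real.cosh (κ + x + μ * Real.sin x))⁻¹ :=
      funext hy
    rw [hyeq]
    exact this
  rw [hder.deriv, hg, hy, hf]
  have hs : Real.sinh u ^ 2 = Real.cosh u ^ 2 - 1 := by
    have := Real.cosh_sq u; linarith
  field_simp
  linear_combination (1 + μ * Real.cos x) ^ 2 * Real.cosh u ^ 4 * hs
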